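/- Let M be a real m×n matrix and k₁ ≤ k₂ ≤ min(m,n) positive integers. If μ is an optimal k₁-assignment in M, then there exists an optimal k₂-assignment μ' such that every row or column that intersects μ also intersects μ'. Moreover, if ν is an optimal k₂-assignment, then there exists an optimal k₁-assignment ν' such that every row or column intersecting ν' also intersects ν. -/

import Mathlib

open Finset

variable {m n : ℕ}

/-- A set of sites is independent (an assignment) if no two of its sites share
a row or a column. -/
def Indep (π : Finset (Fin m × Fin n)) : Prop :=
  ∀ p ∈ π, ∀ q ∈ π, p ≠ q → p.1 ≠ q.1 ∧ p.2 ≠ q.2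

/-- The cost of a set of sites in the matrix `M`. -/
def cost (M : Fin m → Fin n → ℝ) (π : Finset (Fin m × Fin n)) : ℝ :=
  ∑ p ∈ π, M p.1 p.2

/-- `π` is an optimal `k`-assignment in `M`. -/
def IsOptAssign (M : Fin m → Fin n → ℝ) (k : ℕ) (π : Finset (Fin m × Fin n)) : Prop :=
  Indep π ∧ π.card = k ∧
    ∀ σ : Finset (Fin m × Fin n), Indep σ → σ.card = k → cost M π ≤ cost M σ

/-- The set of files consisting of the rows `X` and the columns `Y` covers `Z`. -/
def Covers (X : Finset (Fin m)) (Y : Finset (Fin n)) (Z : Finset (Fin m × Fin n)) : Prop :=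
  ∀ p ∈ Z, p.1 ∈ X ∨ p.2 ∈ Y

/-- `(X, Y)` is a minimum-size cover of `Z`. -/
def IsOptCover (Z : Finset (Fin m × Fin n)) (X : Finset (Fin m)) (Y : Finset (Fin n)) : Prop :=
  Covers X Y Z ∧ ∀ (X' : Finset (Fin m)) (Y' : Finset (Fin n)),
    Covers X' Y' Z → X.card + Y.card ≤ X'.card + Y'.card

attribute [local instance] Classical.propDecidable
namespace Nest
def co (b : Bool) (p : Fin m × Fin n) : Fin m ⊕ Fin n :=
  if b then Sum.inl p.1 else Sum.inr p.2
lemma indep_co {A : Finset (Fin m × Fin n)} (hA : Indep A) {p q : Fin m × Fin n}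
    (hp : p ∈ A) (hq : q ∈ A) {b : Bool} (h : co b p = co b q) : p = q := by
  by_contra hne
  obtain ⟨h1, h2⟩ := hA p hp q hq hne
  cases b <;> simp [co] at h
  · exact h2 h
  · exact h1 h
lemma indep_subset {A B : Finset (Fin m × Fin n)} (hA : Indep A) (h : B ⊆ A) : Indep B :=
  fun p hp q hq hne => hA p (h hp) q (h hq) hne
def diffs (A B : Finset (Fin m × Fin n)) : Finset (Fin m × Fin n) :=
  (A \ B) ∪ (B \ A)
lemma diffs_comm (A B : Finset (Fin m × Fin n)) : diffs A B = diffs B A :=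
  Finset.union_comm _ _
lemma mem_diffs {A B : Finset (Fin m × Fin n)} {x} :
    x ∈ diffs A B ↔ (x ∈ A ∧ x ∉ B) ∨ (x ∈ B ∧ x ∉ A) := by
  simp [diffs, Finset.mem_union, Finset.mem_sdiff]
def Stp (D : Finset (Fin m × Fin n)) (x y : Fin m × Fin n) : Prop :=
  x ∈ D ∧ y ∈ D ∧ x ≠ y ∧ (co true x = co true y ∨ co false x = co false y)
lemma stp_symm {D : Finset (Fin m × Fin n)} : Symmetric (Stp D) := by
  rintro x y ⟨hx, hy, hne, h⟩
  exact ⟨hy, hx, hne.symm, h.imp Eq.symm Eq.symm⟩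
def Reach (D : Finset (Fin m × Fin n)) : Fin m × Fin n → Fin m × Fin n → Prop :=
  Relation.ReflTransGen (Stp D)
lemma reach_symm {D : Finset (Fin m × Fin n)} {x y} (h : Reach D x y) : Reach D y x :=
  haveI : Std.Symm (Stp D) := ⟨stp_symm⟩; Std.Symm.symm (r := Relation.ReflTransGen (Stp D)) _ _ h
lemma reach_mem {D : Finset (Fin m × Fin n)} {x y} (h : Reach D x y) (hx : x ∈ D) :
    y ∈ D := by
  induction h with
  | refl => exact hx
  | tail _ hstp ih => exact hstp.2.1
lemma reach_mono {D D' : Finset (Fin m × Fin n)} (hsub : D ⊆ D') {x y}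
    (h : Reach D x y) : Reach D' x y := by
  induction h with
  | refl => exact Relation.ReflTransGen.refl
  | tail _ hstp ih => exact ih.tail ⟨hsub hstp.1, hsub hstp.2.1, hstp.2.2⟩
noncomputable def comp (D : Finset (Fin m × Fin n)) (p : Fin m × Fin n) :
    Finset (Fin m × Fin n) := D.filter (Reach D p)
lemma mem_comp {D : Finset (Fin m × Fin n)} {p q} :
    q ∈ comp D p ↔ q ∈ D ∧ Reach D p q := Finset.mem_filter
lemma self_mem_comp {D : Finset (Fin m × Fin n)} {p} (hp : p ∈ D) : p ∈ comp D p :=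
  mem_comp.2 ⟨hp, Relation.ReflTransGen.refl⟩
lemma comp_subset {D : Finset (Fin m × Fin n)} {p} : comp D p ⊆ D :=
  Finset.filter_subset _ _
lemma comp_eq_of_mem {D : Finset (Fin m × Fin n)} {p q} (h : q ∈ comp D p) :
    comp D q = comp D p := by
  obtain ⟨hq, hr⟩ := mem_comp.1 h
  ext y
  simp only [mem_comp]
  exact ⟨fun ⟨hy, h1⟩ => ⟨hy, hr.trans h1⟩, fun ⟨hy, h1⟩ => ⟨hy, (reach_symm hr).trans h1⟩⟩

/-- Walk lemma: the component of a site of `A` which is "exposed" in coordinate `b`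
(no site of `B` shares that file) contains as many `A`-sites as `B`-sites, and at
most one more. -/
lemma walk : ∀ (N : ℕ) (A B : Finset (Fin m × Fin n)), Indep A → Indep B →
    ∀ (p : Fin m × Fin n) (b : Bool), p ∈ A → p ∉ B →
    (diffs A B).card ≤ N → (∀ q ∈ B, co b q ≠ co b p) →
    (B ∩ comp (diffs A B) p).card ≤ (A ∩ comp (diffs A B) p).card ∧
    (A ∩ comp (diffs A B) p).card ≤ (B ∩ comp (diffs A B) p).card + 1 := by
  intro N
  induction N with
  | zero =>
    intro A B hA hB p b hpA hpB hcard hexp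
    exfalso
    have hpD : p ∈ diffs A B := mem_diffs.2 (Or.inl ⟨hpA, hpB⟩)
    have := Finset.card_pos.2 ⟨p, hpD⟩
    omega
  | succ N IH =>
    intro A B hA hB p b hpA hpB hcard hexp
    have hpD : p ∈ diffs A B := mem_diffs.2 (Or.inl ⟨hpA, hpB⟩)
    set D := diffs A B with hD
    by_cases hq : ∃ q ∈ B, co (!b) q = co (!b) p
    · obtain ⟨q, hqB, hqco⟩ := hq
      have hqA : q ∉ A := by
        intro hqA
        exact hpB (indep_co hA hqA hpA hqco ▸ hqB)
      have hqp : q ≠ p := fun h => hpB (h ▸ hqB)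
      have hqD : q ∈ D := mem_diffs.2 (Or.inr ⟨hqB, hqA⟩)
      set A' := A.erase p with hA'def
      have hA' : Indep A' := indep_subset hA (Finset.erase_subset _ _)
      have hD' : diffs A' B = D.erase p := by
        rw [hD]
        ext x
        simp only [mem_diffs, Finset.mem_erase, hA'def]
        constructor
        · rintro (⟨⟨hxp, hxA⟩, hxB⟩ | ⟨hxB, hxA⟩)
          · exact ⟨hxp, Or.inl ⟨hxA, hxB⟩⟩
          · refine ⟨fun h => hpB (h ▸ hxB), Or.inr ⟨hxB, fun h => hxA ⟨fun h' => hpB (h' ▸ hxB), h⟩⟩⟩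
        · rintro ⟨hxp, ⟨hxA, hxB⟩ | ⟨hxB, hxA⟩⟩
          · exact Or.inl ⟨⟨hxp, hxA⟩, hxB⟩
          · exact Or.inr ⟨hxB, fun h => hxA h.2⟩
      have hDer : D.erase p ⊆ D := Finset.erase_subset _ _
      have hcard' : (diffs A' B).card ≤ N := by
        rw [hD']
        have := Finset.card_erase_of_mem hpD
        have := Finset.card_pos.2 ⟨p, hpD⟩
        omega
      have hexp' : ∀ r ∈ A', co (!b) r ≠ co (!b) q := by
        intro r hr hco
        have hrA : r ∈ A := Finset.mem_of_mem_erase hr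
        have : r = p := indep_co hA hrA hpA (hco.trans hqco)
        exact (Finset.mem_erase.1 hr).1 this
      have hqA' : q ∉ A' := fun h => hqA (Finset.mem_of_mem_erase h)
      have IH' := IH B A' hB hA' q (!b) hqB hqA' (by rwa [diffs_comm]) hexp'
      rw [diffs_comm] at IH'
      set D' := diffs A' B with hD'def
      set C' := comp D' q with hC'
      -- p ∉ C'
      have hpC' : p ∉ C' := by
        intro h
        have := comp_subset h
        rw [hD'] at this
        exact (Finset.mem_erase.1 this).1 rfl
      have hqD' : q ∈ D' := by
        rw [hD']
        exact Finset.mem_erase.2 ⟨hqp, hqD⟩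
      have hstep : Stp D p q := by
        refine ⟨hpD, hqD, hqp.symm.symm.symm, ?_⟩
        cases b
        · exact Or.inl hqco.symm
        · exact Or.inr hqco.symm
      -- p's unique neighbour is q
      have huniq : ∀ z, Stp D p z → z = q := by
        rintro z ⟨-, hzD, hne, hco⟩
        have hcases : co b z = co b p ∨ co (!b) z = co (!b) p := by
          cases b
          · exact (hco.imp Eq.symm Eq.symm).symm
          · exact hco.imp Eq.symm Eq.symm
        rcases mem_diffs.1 hzD with ⟨hzA, -⟩ | ⟨hzB, -⟩
        · rcases hcases with h | h
          · exact absurd (indep_co hA hzA hpA h) hne.symm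
          · exact absurd (indep_co hA hzA hpA h) hne.symm
        · rcases hcases with h | h
          · exact absurd h (hexp z hzB)
          · exact indep_co hB hzB hqB (h.trans hqco.symm)
      have hshift : ∀ y, Reach D p y → y = p ∨ Reach D' q y := by
        intro y hy
        induction hy with
        | refl => exact Or.inl rfl
        | @tail y' z hy' hstp ih =>
          rcases ih with rfl | ih
          · have := huniq z hstp
            subst this
            exact Or.inr Relation.ReflTransGen.refl
          · by_cases hzp : z = p
            · exact Or.inl hzp
            · have hy'D' : y' ∈ D' := reach_mem ih hqD'
              have hzD' : z ∈ D' := by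
                rw [hD']
                exact Finset.mem_erase.2 ⟨hzp, hstp.2.1⟩
              exact Or.inr (ih.tail ⟨hy'D', hzD', hstp.2.2⟩)
      have hcompeq : comp D p = insert p C' := by
        ext x
        simp only [Finset.mem_insert, mem_comp]
        constructor
        · rintro ⟨hxD, hr⟩
          rcases hshift x hr with rfl | h
          · exact Or.inl rfl
          · exact Or.inr (mem_comp.2 ⟨reach_mem h hqD', h⟩)
        · rintro (rfl | hx)
          · exact ⟨hpD, Relation.ReflTransGen.refl⟩
          · obtain ⟨hxD', hr⟩ := mem_comp.1 hx
            have hsub : D' ⊆ D := fun y hy => hDer (by rw [← hD']; exact hy)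
            exact ⟨hsub hxD', (Relation.ReflTransGen.single hstep).trans (reach_mono hsub hr)⟩
      have hAC : A ∩ C' = A' ∩ C' := by
        ext x
        simp only [Finset.mem_inter, hA'def, Finset.mem_erase]
        constructor
        · rintro ⟨hxA, hxC⟩
          exact ⟨⟨fun h => hpC' (h ▸ hxC), hxA⟩, hxC⟩
        · rintro ⟨⟨-, hxA⟩, hxC⟩
          exact ⟨hxA, hxC⟩
      have hA1 : (A ∩ comp D p).card = (A' ∩ C').card + 1 := by
        rw [hcompeq]
        have : A ∩ insert p C' = insert p (A ∩ C') := by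
          ext x
          simp only [Finset.mem_inter, Finset.mem_insert]
          constructor
          · rintro ⟨hxA, rfl | hx⟩
            · exact Or.inl rfl
            · exact Or.inr ⟨hxA, hx⟩
          · rintro (rfl | ⟨h1, h2⟩)
            · exact ⟨hpA, Or.inl rfl⟩
            · exact ⟨h1, Or.inr h2⟩
        rw [this, Finset.card_insert_of_notMem (fun h => hpC' (Finset.mem_inter.1 h).2), hAC]
      have hB1 : (B ∩ comp D p).card = (B ∩ C').card := by
        rw [hcompeq]
        congr 1
        ext x
        simp only [Finset.mem_inter, Finset.mem_insert]
        constructor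
        · rintro ⟨hxB, rfl | hx⟩
          · exact absurd hxB hpB
          · exact ⟨hxB, hx⟩
        · rintro ⟨h1, h2⟩
          exact ⟨h1, Or.inr h2⟩
      omega
    · -- p is isolated
      push_neg at hq
      have hnostep : ∀ z, ¬ Stp D p z := by
        rintro z ⟨-, hzD, hne, hco⟩
        have hcases : co b z = co b p ∨ co (!b) z = co (!b) p := by
          cases b
          · exact (hco.imp Eq.symm Eq.symm).symm
          · exact hco.imp Eq.symm Eq.symm
        rcases mem_diffs.1 hzD with ⟨hzA, -⟩ | ⟨hzB, -⟩
        · rcases hcases with h | h <;> exact hne.symm (indep_co hA hzA hpA h)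
        · rcases hcases with h | h
          · exact hexp z hzB h
          · exact hq z hzB h
      have hcompeq : comp D p = {p} := by
        ext x
        simp only [mem_comp, Finset.mem_singleton]
        constructor
        · rintro ⟨hxD, hr⟩
          rcases hr.cases_head with rfl | ⟨c, hc, -⟩
          · rfl
          · exact absurd hc (hnostep c)
        · rintro rfl
          exact ⟨hpD, Relation.ReflTransGen.refl⟩
      rw [hcompeq]
      have h1 : B ∩ {p} = ∅ := by
        ext x
        simp only [Finset.mem_inter, Finset.mem_singleton, Finset.notMem_empty, iff_false]
        rintro ⟨hxB, rfl⟩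
        exact hpB hxB
      have h2 : A ∩ {p} = {p} := by
        ext x
        simp only [Finset.mem_inter, Finset.mem_singleton]
        exact ⟨fun h => h.2, fun h => ⟨h ▸ hpA, h⟩⟩
      rw [h1, h2, Finset.card_empty, Finset.card_singleton]
      omega


section Two

variable {A B : Finset (Fin m × Fin n)}

lemma count (hA : Indep A) (hB : Indep B) {p : Fin m × Fin n}
    (hmate : ∀ q ∈ B ∩ comp (diffs A B) p, ∃ r ∈ A, co true r = co true q) :
    (B ∩ comp (diffs A B) p).card ≤ (A ∩ comp (diffs A B) p).card := by
  set D := diffs A B with hD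
  set K := comp D p with hK
  have hmate' : ∀ q, ∃ r, q ∈ B ∩ K → r ∈ A ∧ co true r = co true q := by
    intro q
    by_cases h : q ∈ B ∩ K
    · obtain ⟨r, hr1, hr2⟩ := hmate q h
      exact ⟨r, fun _ => ⟨hr1, hr2⟩⟩
    · exact ⟨q, fun hq => absurd hq h⟩
  choose f hf using hmate'
  have hf1 : ∀ q ∈ B ∩ K, f q ∈ A := fun q hq => (hf q hq).1
  have hf2 : ∀ q ∈ B ∩ K, co true (f q) = co true q := fun q hq => (hf q hq).2
  apply Finset.card_le_card_of_injOn f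
  · intro q hq
    obtain ⟨hqB, hqK⟩ := Finset.mem_inter.1 hq
    have hqD : q ∈ D := comp_subset hqK
    have hqA : q ∉ A := by
      rcases mem_diffs.1 hqD with ⟨hqA, hq2⟩ | ⟨-, hqA⟩
      · exact absurd hqB hq2
      · exact hqA
    have hfA := hf1 q hq
    have hfco := hf2 q hq
    have hfq : f q ≠ q := fun h => hqA (h ▸ hfA)
    have hfB : f q ∉ B := by
      intro hfB
      exact hfq (indep_co hB hfB hqB hfco)
    have hfD : f q ∈ D := mem_diffs.2 (Or.inl ⟨hfA, hfB⟩)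
    have hstp : Stp D q (f q) := ⟨hqD, hfD, hfq.symm.symm.symm, Or.inl hfco.symm⟩
    refine Finset.mem_inter.2 ⟨hfA, ?_⟩
    obtain ⟨-, hr⟩ := mem_comp.1 hqK
    exact mem_comp.2 ⟨hfD, hr.tail hstp⟩
  · intro q hq q' hq' heq
    have h1 := hf2 q hq
    have h2 := hf2 q' hq'
    rw [heq] at h1
    exact (indep_co hB (Finset.mem_inter.1 hq').1 (Finset.mem_inter.1 hq).1
      (h1.symm.trans h2).symm).symm

lemma heavy (hA : Indep A) (hB : Indep B) {p : Fin m × Fin n}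
    (hab : (A ∩ comp (diffs A B) p).card < (B ∩ comp (diffs A B) p).card) :
    (B ∩ comp (diffs A B) p).card = (A ∩ comp (diffs A B) p).card + 1 ∧
    ∀ x ∈ A ∩ comp (diffs A B) p, ∀ b : Bool,
      ∃ y ∈ B ∩ comp (diffs A B) p, co b y = co b x := by
  set D := diffs A B with hD
  set K := comp D p with hK
  have hBnotA : ∀ q ∈ B ∩ K, q ∉ A := by
    intro q hq
    have hqD : q ∈ D := comp_subset (Finset.mem_inter.1 hq).2
    rcases mem_diffs.1 hqD with ⟨-, hq2⟩ | ⟨-, hqA⟩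
    · exact absurd (Finset.mem_inter.1 hq).1 hq2
    · exact hqA
  have hAnotB : ∀ x ∈ A ∩ K, x ∉ B := by
    intro x hx
    have hxD : x ∈ D := comp_subset (Finset.mem_inter.1 hx).2
    rcases mem_diffs.1 hxD with ⟨-, hx2⟩ | ⟨-, hxA⟩
    · exact hx2
    · exact absurd (Finset.mem_inter.1 hx).1 hxA
  -- find an exposed B-site in the component
  have hexists : ∃ q ∈ B ∩ K, ∀ r ∈ A, co true r ≠ co true q := by
    by_contra hcon
    push_neg at hcon
    exact absurd (count hA hB hcon) (not_le.2 hab)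
  obtain ⟨q, hqBK, hqexp⟩ := hexists
  have hqB : q ∈ B := (Finset.mem_inter.1 hqBK).1
  have hqA : q ∉ A := hBnotA q hqBK
  have hcompq : comp D q = K := comp_eq_of_mem (Finset.mem_inter.1 hqBK).2
  have hwalk := walk (diffs B A).card B A hB hA q true hqB hqA le_rfl hqexp
  rw [diffs_comm B A, ← hD, hcompq] at hwalk
  refine ⟨by omega, ?_⟩
  intro x hx b
  by_contra hcon
  push_neg at hcon
  have hxA : x ∈ A := (Finset.mem_inter.1 hx).1
  have hxK : x ∈ K := (Finset.mem_inter.1 hx).2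
  have hxB : x ∉ B := hAnotB x hx
  have hxD : x ∈ D := comp_subset hxK
  have hexp : ∀ y ∈ B, co b y ≠ co b x := by
    intro y hyB hyco
    have hyA : y ∉ B ∩ K → False := fun hnot => by
      -- show y ∈ B ∩ K
      apply hnot
      have hyA' : y ∉ A := by
        intro hyA'
        exact hxB ((indep_co hA hyA' hxA hyco) ▸ hyB)
      have hyD : y ∈ D := mem_diffs.2 (Or.inr ⟨hyB, hyA'⟩)
      have hne : x ≠ y := fun h => hxB (h ▸ hyB)
      have hstp : Stp D x y := by
        refine ⟨hxD, hyD, hne, ?_⟩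
        cases b
        · exact Or.inr hyco.symm
        · exact Or.inl hyco.symm
      have hrx : Reach D p x := (mem_comp.1 hxK).2
      exact Finset.mem_inter.2 ⟨hyB, mem_comp.2 ⟨hyD, hrx.tail hstp⟩⟩
    exact hyA fun hyBK => hcon y hyBK hyco
  have hcompx : comp D x = K := comp_eq_of_mem hxK
  have hwalk2 := walk (diffs A B).card A B hA hB x b hxA hxB le_rfl hexp
  rw [← hD, hcompx] at hwalk2
  omega

end Two


lemma cost_union {M : Fin m → Fin n → ℝ} {s t : Finset (Fin m × Fin n)}
    (h : Disjoint s t) : cost M (s ∪ t) = cost M s + cost M t :=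
  Finset.sum_union h

lemma card_inter_biUnion {X : Type*} [DecidableEq X] {S : Finset X} {F : Finset (Finset X)}
    (hdisj : ∀ K₁ ∈ F, ∀ K₂ ∈ F, K₁ ≠ K₂ → Disjoint K₁ K₂) :
    (S ∩ F.biUnion id).card = ∑ K ∈ F, (S ∩ K).card := by
  have h : S ∩ F.biUnion id = F.biUnion (fun K => S ∩ K) := by
    ext x
    simp only [Finset.mem_inter, Finset.mem_biUnion, id]
    tauto
  rw [h, Finset.card_biUnion]
  intro K₁ h1 K₂ h2 hne
  exact (hdisj K₁ h1 K₂ h2 hne).mono Finset.inter_subset_right Finset.inter_subset_right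

lemma indep_of_co {σ : Finset (Fin m × Fin n)}
    (h : ∀ p ∈ σ, ∀ q ∈ σ, ∀ bo : Bool, co bo p = co bo q → p = q) : Indep σ := by
  intro p hp q hq hne
  constructor
  · intro h1
    exact hne (h p hp q hq true (by simp [co, h1]))
  · intro h2
    exact hne (h p hp q hq false (by simp [co, h2]))



theorem crux (M : Fin m → Fin n → ℝ) {A B : Finset (Fin m × Fin n)} {k₁ k₂ : ℕ}
    (hA : IsOptAssign M k₁ A) (hB : IsOptAssign M k₂ B) (hk : k₁ ≤ k₂) :
    ∃ σ τ : Finset (Fin m × Fin n), IsOptAssign M k₂ σ ∧ IsOptAssign M k₁ τ ∧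
      (∀ p ∈ A, ∀ bo : Bool, ∃ q ∈ σ, co bo q = co bo p) ∧
      (∀ p ∈ τ, ∀ bo : Bool, ∃ q ∈ B, co bo q = co bo p) := by
  obtain ⟨hAi, hAc, hAo⟩ := hA
  obtain ⟨hBi, hBc, hBo⟩ := hB
  set D := diffs A B with hD
  set CP := D.image (comp D) with hCP
  have hKcomp : ∀ K ∈ CP, ∀ x ∈ K, comp D x = K := by
    intro K hK x hx
    obtain ⟨p, hpD, rfl⟩ := Finset.mem_image.1 hK
    exact comp_eq_of_mem hx
  have hKsub : ∀ K ∈ CP, K ⊆ D := by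
    intro K hK
    obtain ⟨p, hpD, rfl⟩ := Finset.mem_image.1 hK
    exact comp_subset
  have hdisj : ∀ K₁ ∈ CP, ∀ K₂ ∈ CP, K₁ ≠ K₂ → Disjoint K₁ K₂ := by
    intro K₁ h1 K₂ h2 hne
    rw [Finset.disjoint_left]
    intro x hx1 hx2
    exact hne ((hKcomp K₁ h1 x hx1).symm.trans (hKcomp K₂ h2 x hx2))
  have hDbi : D = CP.biUnion id := by
    ext x
    simp only [Finset.mem_biUnion, id]
    constructor
    · intro hx
      exact ⟨comp D x, Finset.mem_image_of_mem _ hx, self_mem_comp hx⟩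
    · rintro ⟨K, hK, hxK⟩
      exact hKsub K hK hxK
  set L := CP.filter (fun K => (B ∩ K).card ≤ (A ∩ K).card) with hL
  set H := CP.filter (fun K => ¬ ((B ∩ K).card ≤ (A ∩ K).card)) with hH
  have hheavy : ∀ K ∈ H, (B ∩ K).card = (A ∩ K).card + 1 ∧
      ∀ x ∈ A ∩ K, ∀ bo : Bool, ∃ y ∈ B ∩ K, co bo y = co bo x := by
    intro K hK
    obtain ⟨hKCP, hlt⟩ := Finset.mem_filter.1 hK
    obtain ⟨p, hpD, rfl⟩ := Finset.mem_image.1 hKCP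
    exact heavy hAi hBi (not_le.1 hlt)
  -- counting
  have haD : (A ∩ D).card = ∑ K ∈ CP, (A ∩ K).card := by
    rw [hDbi]; exact card_inter_biUnion hdisj
  have hbD : (B ∩ D).card = ∑ K ∈ CP, (B ∩ K).card := by
    rw [hDbi]; exact card_inter_biUnion hdisj
  have hAD : A ∩ D = A \ B := by
    ext x
    simp only [Finset.mem_inter, Finset.mem_sdiff, hD, mem_diffs]
    tauto
  have hBD : B ∩ D = B \ A := by
    ext x
    simp only [Finset.mem_inter, Finset.mem_sdiff, hD, mem_diffs]
    tauto
  have hcA : (A \ B).card + (A ∩ B).card = A.card := Finset.card_sdiff_add_card_inter A B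
  have hcB : (B \ A).card + (B ∩ A).card = B.card := Finset.card_sdiff_add_card_inter B A
  have hABBA : (A ∩ B).card = (B ∩ A).card := by rw [Finset.inter_comm]
  have hdiff : ((B ∩ D).card : ℤ) - ((A ∩ D).card : ℤ) = (k₂ : ℤ) - (k₁ : ℤ) := by
    rw [hAD, hBD]
    omega
  have hLHdisj : Disjoint L H := Finset.disjoint_filter_filter_not CP CP _
  have hLH : L ∪ H = CP := Finset.filter_union_filter_not_eq _ CP
  set sZ := ∑ K ∈ L, (((A ∩ K).card : ℤ) - ((B ∩ K).card : ℤ)) with hsZ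
  have hs0 : 0 ≤ sZ := by
    apply Finset.sum_nonneg
    intro K hK
    have := (Finset.mem_filter.1 hK).2
    omega
  have hsumH : ∑ K ∈ H, (((B ∩ K).card : ℤ) - ((A ∩ K).card : ℤ)) = H.card := by
    rw [Finset.sum_congr rfl (fun K hK => by
      have := (hheavy K hK).1
      omega : ∀ K ∈ H, (((B ∩ K).card : ℤ) - ((A ∩ K).card : ℤ)) = 1)]
    simp
  have hbal : (H.card : ℤ) - sZ = (k₂ : ℤ) - (k₁ : ℤ) := by
    have h1 : ∑ K ∈ CP, (((B ∩ K).card : ℤ) - ((A ∩ K).card : ℤ))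
        = ((B ∩ D).card : ℤ) - ((A ∩ D).card : ℤ) := by
      rw [haD, hbD, Finset.sum_sub_distrib]
      push_cast
      ring
    rw [← hLH, Finset.sum_union hLHdisj, hsumH] at h1
    have h2 : ∑ K ∈ L, (((B ∩ K).card : ℤ) - ((A ∩ K).card : ℤ)) = -sZ := by
      rw [hsZ, ← Finset.sum_neg_distrib]
      exact Finset.sum_congr rfl (fun K hK => by ring)
    rw [h2] at h1
    omega
  have hsNH : sZ.toNat ≤ H.card := by omega
  obtain ⟨U, hUH, hUcard⟩ := Finset.exists_subset_card_eq (s := H) hsNH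
  set F := L ∪ U with hF
  set T := F.biUnion id with hT
  have hFCP : F ⊆ CP := Finset.union_subset (Finset.filter_subset _ _)
    (hUH.trans (Finset.filter_subset _ _))
  have hLUdisj : Disjoint L U := hLHdisj.mono_right hUH
  have hdisjF : ∀ K₁ ∈ F, ∀ K₂ ∈ F, K₁ ≠ K₂ → Disjoint K₁ K₂ :=
    fun K₁ h1 K₂ h2 hne => hdisj K₁ (hFCP h1) K₂ (hFCP h2) hne
  have hTA : (A ∩ T).card = ∑ K ∈ F, (A ∩ K).card := card_inter_biUnion hdisjF
  have hTB : (B ∩ T).card = ∑ K ∈ F, (B ∩ K).card := card_inter_biUnion hdisjF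
  have hTbal : ∑ K ∈ F, (((A ∩ K).card : ℤ) - ((B ∩ K).card : ℤ)) = 0 := by
    rw [hF, Finset.sum_union hLUdisj, ← hsZ]
    have hU : ∑ K ∈ U, (((A ∩ K).card : ℤ) - ((B ∩ K).card : ℤ)) = -(U.card : ℤ) := by
      rw [Finset.sum_congr rfl (fun K hK => by
        have := (hheavy K (hUH hK)).1
        omega : ∀ K ∈ U, (((A ∩ K).card : ℤ) - ((B ∩ K).card : ℤ)) = -1)]
      simp
    rw [hU, hUcard]
    omega
  have hTcard : (A ∩ T).card = (B ∩ T).card := by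
    have h1 : ((A ∩ T).card : ℤ) = ∑ K ∈ F, ((A ∩ K).card : ℤ) := by
      rw [hTA]; push_cast; rfl
    have h2 : ((B ∩ T).card : ℤ) = ∑ K ∈ F, ((B ∩ K).card : ℤ) := by
      rw [hTB]; push_cast; rfl
    have h3 := hTbal
    rw [Finset.sum_sub_distrib] at h3
    omega
  -- membership/closure facts about T
  have hTD : T ⊆ D := by
    intro x hx
    obtain ⟨K, hKF, hxK⟩ := Finset.mem_biUnion.1 hx
    exact hKsub K (hFCP hKF) hxK
  have hTofF : ∀ K ∈ F, ∀ x ∈ K, x ∈ T := by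
    intro K hKF x hx
    exact Finset.mem_biUnion.2 ⟨K, hKF, hx⟩
  have hcompT : ∀ x ∈ T, comp D x ∈ F := by
    intro x hx
    obtain ⟨K, hKF, hxK⟩ := Finset.mem_biUnion.1 hx
    rw [hKcomp K (hFCP hKF) x hxK]
    exact hKF
  have hout : ∀ x, x ∈ D → x ∉ T →
      (A ∩ comp D x).card < (B ∩ comp D x).card ∧
      ∀ y ∈ A ∩ comp D x, ∀ bo : Bool, ∃ z ∈ B ∩ comp D x, co bo z = co bo y := by
    intro x hxD hxT
    have hKCP : comp D x ∈ CP := Finset.mem_image_of_mem _ hxD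
    have hKF : comp D x ∉ F := fun h => hxT (hTofF _ h x (self_mem_comp hxD))
    have hKH : comp D x ∈ H := by
      by_cases hc : (B ∩ comp D x).card ≤ (A ∩ comp D x).card
      · exact absurd (Finset.mem_union_left _ (Finset.mem_filter.2 ⟨hKCP, hc⟩)) hKF
      · exact Finset.mem_filter.2 ⟨hKCP, hc⟩
    have := hheavy _ hKH
    exact ⟨by omega, this.2⟩
  have hcross : ∀ x ∈ T, ∀ y ∈ D, y ∉ T → ∀ bo : Bool, co bo x = co bo y → False := by
    intro x hxT y hyD hyT bo hco
    have hxD := hTD hxT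
    have hne : x ≠ y := fun h => hyT (h ▸ hxT)
    have hstp : Stp D x y := by
      refine ⟨hxD, hyD, hne, ?_⟩
      cases bo
      · exact Or.inr hco
      · exact Or.inl hco
    apply hyT
    apply hTofF (comp D x) (hcompT x hxT)
    exact mem_comp.2 ⟨hyD, Relation.ReflTransGen.single hstp⟩
  -- the two exchanged assignments
  set σ := ((A ∩ B) ∪ (A ∩ T)) ∪ (B ∩ (D \ T)) with hσ
  set τ := ((A ∩ B) ∪ (B ∩ T)) ∪ (A ∩ (D \ T)) with hτ
  have hABD : ∀ x ∈ A ∩ B, x ∉ D := by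
    intro x hx hxD
    obtain ⟨hxA, hxB⟩ := Finset.mem_inter.1 hx
    rcases mem_diffs.1 hxD with ⟨-, h⟩ | ⟨-, h⟩
    · exact h hxB
    · exact h hxA
  -- membership helpers
  have hmemσB : ∀ x ∈ σ, x ∉ B → x ∈ A ∧ x ∈ T := by
    intro x hx hxB
    rcases Finset.mem_union.1 hx with hx' | hx'
    · rcases Finset.mem_union.1 hx' with hx'' | hx''
      · exact absurd (Finset.mem_inter.1 hx'').2 hxB
      · exact ⟨(Finset.mem_inter.1 hx'').1, (Finset.mem_inter.1 hx'').2⟩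
    · exact absurd (Finset.mem_inter.1 hx').1 hxB
  have hmemσA : ∀ x ∈ σ, x ∉ A → x ∈ B ∧ x ∈ D ∧ x ∉ T := by
    intro x hx hxA
    rcases Finset.mem_union.1 hx with hx' | hx'
    · rcases Finset.mem_union.1 hx' with hx'' | hx''
      · exact absurd (Finset.mem_inter.1 hx'').1 hxA
      · exact absurd (Finset.mem_inter.1 hx'').1 hxA
    · obtain ⟨h1, h2⟩ := Finset.mem_inter.1 hx'
      exact ⟨h1, (Finset.mem_sdiff.1 h2).1, (Finset.mem_sdiff.1 h2).2⟩
  have hmemτA : ∀ x ∈ τ, x ∉ A → x ∈ B ∧ x ∈ T := by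
    intro x hx hxA
    rcases Finset.mem_union.1 hx with hx' | hx'
    · rcases Finset.mem_union.1 hx' with hx'' | hx''
      · exact absurd (Finset.mem_inter.1 hx'').1 hxA
      · exact ⟨(Finset.mem_inter.1 hx'').1, (Finset.mem_inter.1 hx'').2⟩
    · exact absurd (Finset.mem_inter.1 hx').1 hxA
  have hmemτB : ∀ x ∈ τ, x ∉ B → x ∈ A ∧ x ∈ D ∧ x ∉ T := by
    intro x hx hxB
    rcases Finset.mem_union.1 hx with hx' | hx'
    · rcases Finset.mem_union.1 hx' with hx'' | hx''
      · exact absurd (Finset.mem_inter.1 hx'').2 hxB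
      · exact absurd (Finset.mem_inter.1 hx'').1 hxB
    · obtain ⟨h1, h2⟩ := Finset.mem_inter.1 hx'
      exact ⟨h1, (Finset.mem_sdiff.1 h2).1, (Finset.mem_sdiff.1 h2).2⟩
  -- independence
  have hσi : Indep σ := by
    apply indep_of_co
    intro p hp q hq bo hco
    by_cases hpA : p ∈ A <;> by_cases hqA : q ∈ A
    · exact indep_co hAi hpA hqA hco
    · obtain ⟨hqB, hqD, hqT⟩ := hmemσA q hq hqA
      by_cases hpB : p ∈ B
      · exact indep_co hBi hpB hqB hco
      · obtain ⟨-, hpT⟩ := hmemσB p hp hpB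
        exact absurd (hcross p hpT q hqD hqT bo hco) not_false
    · obtain ⟨hpB, hpD, hpT⟩ := hmemσA p hp hpA
      by_cases hqB : q ∈ B
      · exact indep_co hBi hpB hqB hco
      · obtain ⟨-, hqT⟩ := hmemσB q hq hqB
        exact absurd (hcross q hqT p hpD hpT bo hco.symm) not_false
    · exact indep_co hBi (hmemσA p hp hpA).1 (hmemσA q hq hqA).1 hco
  have hτi : Indep τ := by
    apply indep_of_co
    intro p hp q hq bo hco
    by_cases hpB : p ∈ B <;> by_cases hqB : q ∈ B
    · exact indep_co hBi hpB hqB hco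
    · obtain ⟨hqA, hqD, hqT⟩ := hmemτB q hq hqB
      by_cases hpA : p ∈ A
      · exact indep_co hAi hpA hqA hco
      · obtain ⟨-, hpT⟩ := hmemτA p hp hpA
        exact absurd (hcross p hpT q hqD hqT bo hco) not_false
    · obtain ⟨hpA, hpD, hpT⟩ := hmemτB p hp hpB
      by_cases hqA : q ∈ A
      · exact indep_co hAi hpA hqA hco
      · obtain ⟨-, hqT⟩ := hmemτA q hq hqA
        exact absurd (hcross q hqT p hpD hpT bo hco.symm) not_false
    · exact indep_co hAi (hmemτB p hp hpB).1 (hmemτB q hq hqB).1 hco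
  -- cardinalities
  have hd1 : Disjoint (A ∩ B) (A ∩ T) := by
    rw [Finset.disjoint_left]
    intro x hx hx'
    exact hABD x hx (hTD (Finset.mem_inter.1 hx').2)
  have hd1' : Disjoint (A ∩ B) (B ∩ T) := by
    rw [Finset.disjoint_left]
    intro x hx hx'
    exact hABD x hx (hTD (Finset.mem_inter.1 hx').2)
  have hd2 : Disjoint ((A ∩ B) ∪ (A ∩ T)) (B ∩ (D \ T)) := by
    rw [Finset.disjoint_left]
    intro x hx hx'
    obtain ⟨-, hxD⟩ := Finset.mem_inter.1 hx'
    obtain ⟨hxD', hxT⟩ := Finset.mem_sdiff.1 hxD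
    rcases Finset.mem_union.1 hx with h | h
    · exact hABD x h hxD'
    · exact hxT (Finset.mem_inter.1 h).2
  have hd2' : Disjoint ((A ∩ B) ∪ (B ∩ T)) (A ∩ (D \ T)) := by
    rw [Finset.disjoint_left]
    intro x hx hx'
    obtain ⟨-, hxD⟩ := Finset.mem_inter.1 hx'
    obtain ⟨hxD', hxT⟩ := Finset.mem_sdiff.1 hxD
    rcases Finset.mem_union.1 hx with h | h
    · exact hABD x h hxD'
    · exact hxT (Finset.mem_inter.1 h).2
  have hBTsub : B ∩ T ⊆ B ∩ D := fun x hx =>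
    Finset.mem_inter.2 ⟨(Finset.mem_inter.1 hx).1, hTD (Finset.mem_inter.1 hx).2⟩
  have hATsub : A ∩ T ⊆ A ∩ D := fun x hx =>
    Finset.mem_inter.2 ⟨(Finset.mem_inter.1 hx).1, hTD (Finset.mem_inter.1 hx).2⟩
  have hBDT : B ∩ (D \ T) = (B ∩ D) \ (B ∩ T) := by
    ext x
    simp only [Finset.mem_inter, Finset.mem_sdiff]
    tauto
  have hADT : A ∩ (D \ T) = (A ∩ D) \ (A ∩ T) := by
    ext x
    simp only [Finset.mem_inter, Finset.mem_sdiff]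
    tauto
  have hσcard : σ.card = k₂ := by
    rw [hσ, Finset.card_union_of_disjoint hd2, Finset.card_union_of_disjoint hd1, hBDT,
      Finset.card_sdiff_of_subset hBTsub]
    have h1 := Finset.card_le_card hBTsub
    rw [hBD] at *
    omega
  have hτcard : τ.card = k₁ := by
    rw [hτ, Finset.card_union_of_disjoint hd2', Finset.card_union_of_disjoint hd1', hADT,
      Finset.card_sdiff_of_subset hATsub]
    have h1 := Finset.card_le_card hATsub
    rw [hAD] at *
    omega
  -- costs
  have hBsplit : (A ∩ B) ∪ (B ∩ D) = B := by
    ext x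
    simp only [Finset.mem_union, Finset.mem_inter, hBD, Finset.mem_sdiff]
    constructor
    · rintro (⟨-, h⟩ | ⟨h, -⟩) <;> exact h
    · intro h
      by_cases hA' : x ∈ A
      · exact Or.inl ⟨hA', h⟩
      · exact Or.inr ⟨h, hA'⟩
  have hAsplit : (A ∩ B) ∪ (A ∩ D) = A := by
    ext x
    simp only [Finset.mem_union, Finset.mem_inter, hAD, Finset.mem_sdiff]
    constructor
    · rintro (⟨h, -⟩ | ⟨h, -⟩) <;> exact h
    · intro h
      by_cases hB' : x ∈ B
      · exact Or.inl ⟨h, hB'⟩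
      · exact Or.inr ⟨h, hB'⟩
  have hdB : Disjoint (A ∩ B) (B ∩ D) := by
    rw [Finset.disjoint_left]
    intro x hx hx'
    exact hABD x hx (Finset.mem_inter.1 hx').2
  have hdA : Disjoint (A ∩ B) (A ∩ D) := by
    rw [Finset.disjoint_left]
    intro x hx hx'
    exact hABD x hx (Finset.mem_inter.1 hx').2
  have hcostB : cost M B = cost M (A ∩ B) + cost M (B ∩ D) := by
    conv_lhs => rw [← hBsplit]
    exact cost_union hdB
  have hcostA : cost M A = cost M (A ∩ B) + cost M (A ∩ D) := by
    conv_lhs => rw [← hAsplit]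
    exact cost_union hdA
  have hsdB : cost M (B ∩ (D \ T)) = cost M (B ∩ D) - cost M (B ∩ T) := by
    rw [hBDT]
    have := Finset.sum_sdiff (f := fun p => M p.1 p.2) hBTsub
    unfold cost
    linarith [this]
  have hsdA : cost M (A ∩ (D \ T)) = cost M (A ∩ D) - cost M (A ∩ T) := by
    rw [hADT]
    have := Finset.sum_sdiff (f := fun p => M p.1 p.2) hATsub
    unfold cost
    linarith [this]
  have hcostσ : cost M σ = cost M B + cost M (A ∩ T) - cost M (B ∩ T) := by
    rw [hσ, cost_union hd2, cost_union hd1, hsdB, hcostB]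
    ring
  have hcostτ : cost M τ = cost M A + cost M (B ∩ T) - cost M (A ∩ T) := by
    rw [hτ, cost_union hd2', cost_union hd1', hsdA, hcostA]
    ring
  have hBσ := hBo σ hσi hσcard
  have hAτ := hAo τ hτi hτcard
  have hcosteq : cost M (A ∩ T) = cost M (B ∩ T) := by linarith
  have hσopt : IsOptAssign M k₂ σ := by
    refine ⟨hσi, hσcard, ?_⟩
    intro π hπi hπc
    have : cost M σ = cost M B := by linarith
    rw [this]
    exact hBo π hπi hπc
  have hτopt : IsOptAssign M k₁ τ := by
    refine ⟨hτi, hτcard, ?_⟩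
    intro π hπi hπc
    have : cost M τ = cost M A := by linarith
    rw [this]
    exact hAo π hπi hπc
  -- coverage
  refine ⟨σ, τ, hσopt, hτopt, ?_, ?_⟩
  · intro p hpA bo
    by_cases hpB : p ∈ B
    · exact ⟨p, Finset.mem_union_left _ (Finset.mem_union_left _
        (Finset.mem_inter.2 ⟨hpA, hpB⟩)), rfl⟩
    · have hpD : p ∈ D := mem_diffs.2 (Or.inl ⟨hpA, hpB⟩)
      by_cases hpT : p ∈ T
      · exact ⟨p, Finset.mem_union_left _ (Finset.mem_union_right _
          (Finset.mem_inter.2 ⟨hpA, hpT⟩)), rfl⟩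
      · obtain ⟨-, hcov⟩ := hout p hpD hpT
        obtain ⟨y, hy, hyco⟩ := hcov p (Finset.mem_inter.2 ⟨hpA, self_mem_comp hpD⟩) bo
        obtain ⟨hyB, hyK⟩ := Finset.mem_inter.1 hy
        have hyD : y ∈ D := comp_subset hyK
        have hyT : y ∉ T := by
          intro hyT
          apply hpT
          apply hTofF (comp D y) (hcompT y hyT)
          rw [comp_eq_of_mem hyK]
          exact self_mem_comp hpD
        exact ⟨y, Finset.mem_union_right _
          (Finset.mem_inter.2 ⟨hyB, Finset.mem_sdiff.2 ⟨hyD, hyT⟩⟩), hyco⟩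
  · intro p hp bo
    by_cases hpB : p ∈ B
    · exact ⟨p, hpB, rfl⟩
    · obtain ⟨hpA, hpD, hpT⟩ := hmemτB p hp hpB
      obtain ⟨-, hcov⟩ := hout p hpD hpT
      obtain ⟨y, hy, hyco⟩ := hcov p (Finset.mem_inter.2 ⟨hpA, self_mem_comp hpD⟩) bo
      exact ⟨y, (Finset.mem_inter.1 hy).1, hyco⟩

lemma exists_opt (M : Fin m → Fin n → ℝ) (k : ℕ) (hm : k ≤ m) (hn : k ≤ n) :
    ∃ π : Finset (Fin m × Fin n), IsOptAssign M k π := by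
  set S := (Finset.univ : Finset (Finset (Fin m × Fin n))).filter
    (fun π => Indep π ∧ π.card = k) with hS
  have hinj : Function.Injective (fun i : Fin k =>
      ((⟨i.1, lt_of_lt_of_le i.2 hm⟩, ⟨i.1, lt_of_lt_of_le i.2 hn⟩) : Fin m × Fin n)) := by
    intro i j h
    have := congrArg (fun p : Fin m × Fin n => (p.1 : ℕ)) h
    exact Fin.ext this
  have hne : S.Nonempty := by
    refine ⟨(Finset.univ : Finset (Fin k)).image (fun i =>
      (⟨i.1, lt_of_lt_of_le i.2 hm⟩, ⟨i.1, lt_of_lt_of_le i.2 hn⟩)), ?_⟩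
    rw [hS, Finset.mem_filter]
    refine ⟨Finset.mem_univ _, ?_, ?_⟩
    · intro p hp q hq hne'
      obtain ⟨i, -, rfl⟩ := Finset.mem_image.1 hp
      obtain ⟨j, -, rfl⟩ := Finset.mem_image.1 hq
      have hij : (i : ℕ) ≠ (j : ℕ) := by
        intro h
        exact hne' (by simp [Fin.ext_iff, h])
      constructor
      · intro h
        exact hij (by simpa [Fin.ext_iff] using h)
      · intro h
        exact hij (by simpa [Fin.ext_iff] using h)
    · rw [Finset.card_image_of_injective _ hinj, Finset.card_univ, Fintype.card_fin]
  obtain ⟨π, hπS, hmin⟩ := Finset.exists_min_image S (cost M) hne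
  rw [hS, Finset.mem_filter] at hπS
  exact ⟨π, hπS.2.1, hπS.2.2, fun σ hσ hc =>
    hmin σ (Finset.mem_filter.2 ⟨Finset.mem_univ _, hσ, hc⟩)⟩

end Nest


/-- Nesting Lemma. -/
theorem nesting_lemma (M : Fin m → Fin n → ℝ) (k₁ k₂ : ℕ)
    (hk₁ : 1 ≤ k₁) (hk : k₁ ≤ k₂) (hk₂ : k₂ ≤ min m n) :
    (∀ μ : Finset (Fin m × Fin n), IsOptAssign M k₁ μ →
      ∃ μ' : Finset (Fin m × Fin n), IsOptAssign M k₂ μ' ∧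
        ∀ p ∈ μ, (∃ q ∈ μ', q.1 = p.1) ∧ (∃ q ∈ μ', q.2 = p.2)) ∧
    (∀ ν : Finset (Fin m × Fin n), IsOptAssign M k₂ ν →
      ∃ ν' : Finset (Fin m × Fin n), IsOptAssign M k₁ ν' ∧
        ∀ p ∈ ν', (∃ q ∈ ν, q.1 = p.1) ∧ (∃ q ∈ ν, q.2 = p.2)) := by
  have hm : k₂ ≤ m := le_trans hk₂ (min_le_left m n)
  have hn : k₂ ≤ n := le_trans hk₂ (min_le_right m n)
  constructor
  · intro μ hμ
    obtain ⟨ν, hν⟩ := Nest.exists_opt M k₂ hm hn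
    obtain ⟨σ, τ, hσ, hτ, hcov1, hcov2⟩ := Nest.crux M hμ hν hk
    refine ⟨σ, hσ, ?_⟩
    intro p hp
    constructor
    · obtain ⟨q, hq, hco⟩ := hcov1 p hp true
      exact ⟨q, hq, by simpa [Nest.co] using hco⟩
    · obtain ⟨q, hq, hco⟩ := hcov1 p hp false
      exact ⟨q, hq, by simpa [Nest.co] using hco⟩
  · intro ν hν
    obtain ⟨μ, hμ⟩ := Nest.exists_opt M k₁ (le_trans hk hm) (le_trans hk hn)
    obtain ⟨σ, τ, hσ, hτ, hcov1, hcov2⟩ := Nest.crux M hμ hν hk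
    refine ⟨τ, hτ, ?_⟩
    intro p hp
    constructor
    · obtain ⟨q, hq, hco⟩ := hcov2 p hp true
      exact ⟨q, hq, by simpa [Nest.co] using hco⟩
    · obtain ⟨q, hq, hco⟩ := hcov2 p hp false
      exact ⟨q, hq, by simpa [Nest.co] using hco⟩
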